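/- If a line passes through two closed balls of radius ε whose centers are at distance L > 0 apart, and 0 < 2ε/L ≤ 1, then the angle δ between the line's direction and the direction of the segment joining the centers satisfies sin δ ≤ 2ε/L. -/

import Mathlib

theorem stmt_4 (p q a b : EuclideanSpace ℝ (Fin 3)) (ε L : ℝ)
    (hL : 0 < L) (hε : 0 < ε) (hεL : 2 * ε ≤ L) (hpq : dist p q = L)
    (ha : a ∈ Metric.closedBall p ε) (hb : b ∈ Metric.closedBall q ε)
    (hab : a ≠ b) :
    Real.sin (InnerProductGeometry.angle (b - a) (q - p)) ≤ 2 * ε / L := by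
  set u := b - a with hu_def
  set v := q - p with hv_def
  have hu : u ≠ 0 := sub_ne_zero.mpr hab.symm
  have hu' : (0 : ℝ) < ‖u‖ := norm_pos_iff.mpr hu
  have hvnorm : ‖v‖ = L := by
    rw [hv_def, ← hpq, dist_eq_norm']
  have h1 : ‖q - b‖ ≤ ε := by
    rw [← dist_eq_norm, dist_comm]; exact hb
  have h2 : ‖p - a‖ ≤ ε := by
    rw [← dist_eq_norm, dist_comm]; exact ha
  have hvu : ‖v - u‖ ≤ 2 * ε := by
    have : v - u = (q - b) - (p - a) := by rw [hv_def, hu_def]; abel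
    rw [this]
    calc ‖(q - b) - (p - a)‖ ≤ ‖q - b‖ + ‖p - a‖ := norm_sub_le _ _
      _ ≤ 2 * ε := by linarith
  have key := InnerProductGeometry.sin_angle_mul_norm_mul_norm u v
  have hns : ‖v - u‖ ^ 2 = ‖v‖ ^ 2 - 2 * inner ℝ v u + ‖u‖ ^ 2 := norm_sub_sq_real v u
  have hsymm : (inner ℝ v u : ℝ) = inner ℝ u v := real_inner_comm u v
  have huu : (inner ℝ u u : ℝ) = ‖u‖ ^ 2 := real_inner_self_eq_norm_sq u
  have hvv : (inner ℝ v v : ℝ) = ‖v‖ ^ 2 := real_inner_self_eq_norm_sq v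
  have hsq : (inner ℝ u u : ℝ) * inner ℝ v v - inner ℝ u v * inner ℝ u v ≤ (‖u‖ * ‖v - u‖) ^ 2 := by
    rw [huu, hvv]
    nlinarith [hns, hsymm, sq_nonneg (‖u‖ ^ 2 - (inner ℝ u v : ℝ))]
  have hsqrt : Real.sqrt ((inner ℝ u u : ℝ) * inner ℝ v v - inner ℝ u v * inner ℝ u v)
      ≤ ‖u‖ * ‖v - u‖ := by
    have h0 : (0 : ℝ) ≤ ‖u‖ * ‖v - u‖ := by positivity
    calc Real.sqrt ((inner ℝ u u : ℝ) * inner ℝ v v - inner ℝ u v * inner ℝ u v)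
        ≤ Real.sqrt ((‖u‖ * ‖v - u‖) ^ 2) := Real.sqrt_le_sqrt hsq
      _ = ‖u‖ * ‖v - u‖ := Real.sqrt_sq h0
  have hmain : Real.sin (InnerProductGeometry.angle u v) * (‖u‖ * L) ≤ ‖u‖ * (2 * ε) := by
    rw [← hvnorm]
    calc Real.sin (InnerProductGeometry.angle u v) * (‖u‖ * ‖v‖)
        = Real.sqrt ((inner ℝ u u : ℝ) * inner ℝ v v - inner ℝ u v * inner ℝ u v) := key
      _ ≤ ‖u‖ * ‖v - u‖ := hsqrt
      _ ≤ ‖u‖ * (2 * ε) := by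
          exact mul_le_mul_of_nonneg_left hvu (le_of_lt hu')
  rw [div_eq_mul_inv, ← ge_iff_le]
  rw [ge_iff_le, ← div_eq_mul_inv, le_div_iff₀ hL]
  nlinarith [hmain, hu']
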